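/- Fix an integer k ≥ 1, and let r_ℓ and p_ℓ (0 ≤ ℓ ≤ k) be as in the eigenvector-branch setup. Suppose (η⁺, ξ⁺, λ⁺) and (η⁻, ξ⁻, λ⁻) are real-analytic solution branches on an interval (−δ, δ) of the system λ(ε)ξ_ℓ(ε) = r_ℓ(ε)ξ_ℓ(ε) + η(ε)p_ℓ(ε) (0 ≤ ℓ ≤ k) with Σ_{ℓ=0}^{k} p_ℓ(ε)ξ_ℓ(ε) = 1, η(0) = k, λ(0) = k, where ξ⁺_0 ≡ 1 and ξ⁻_0 ≡ −1. Then λ⁺(ε)/η⁺(ε) − λ⁻(ε)/η⁻(ε) = 2√(k!) ε^k + O(ε^{k+1}) as ε → 0. -/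

import Mathlib

open scoped BigOperators

/-- `r_ℓ(ε) = (k−ℓ)(1−(k+ℓ)ε²) − ℓε²` (the rescaled eigenvalue `ε²λ_ℓ` under `n = 1/ε²`). -/
noncomputable def rFun (k ℓ : ℕ) (ε : ℝ) : ℝ :=
  ((k : ℝ) - ℓ) * (1 - ((k : ℝ) + ℓ) * ε ^ 2) - ℓ * ε ^ 2

/-- `p_ℓ(ε) = ε^{k−ℓ} √( k!(1−(2ℓ−1)ε²) / ( ℓ!(1−(ℓ−1)ε²)(1−ℓε²)⋯(1−(k−1)ε²) ) )`
(the overlap `‖P_ℓ|w⟩‖` under `n = 1/ε²`). -/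
noncomputable def pFun (k ℓ : ℕ) (ε : ℝ) : ℝ :=
  ε ^ (k - ℓ) *
    Real.sqrt ((k.factorial : ℝ) * (1 - (2 * (ℓ : ℝ) - 1) * ε ^ 2) /
      ((ℓ.factorial : ℝ) *
        ∏ j ∈ Finset.range (k - ℓ + 1), (1 - (((ℓ : ℝ) - 1) + j) * ε ^ 2)))

open Asymptotics Filter

noncomputable def qFun (k ℓ : ℕ) (ε : ℝ) : ℝ :=
  Real.sqrt ((k.factorial : ℝ) * (1 - (2 * (ℓ : ℝ) - 1) * ε ^ 2) /
      ((ℓ.factorial : ℝ) * ∏ j ∈ Finset.range (k - ℓ + 1), (1 - (((ℓ : ℝ) - 1) + j) * ε ^ 2)))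

lemma pFun_eq (k ℓ : ℕ) (ε : ℝ) : pFun k ℓ ε = ε ^ (k - ℓ) * qFun k ℓ ε := rfl

lemma qFun_contAt (k ℓ : ℕ) : ContinuousAt (qFun k ℓ) 0 := by
  apply Real.continuous_sqrt.continuousAt.comp
  apply ContinuousAt.div
  · fun_prop
  · fun_prop
  · have : ∀ j ∈ Finset.range (k - ℓ + 1), (1 - (((ℓ : ℝ) - 1) + j) * (0:ℝ) ^ 2) = 1 := by
      intro j _; ring
    rw [Finset.prod_congr rfl this]
    simp [Nat.factorial_ne_zero]

lemma qFun_zero (k ℓ : ℕ) : qFun k ℓ 0 = Real.sqrt ((k.factorial : ℝ) / ℓ.factorial) := by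
  unfold qFun
  have : ∀ j ∈ Finset.range (k - ℓ + 1), (1 - (((ℓ : ℝ) - 1) + j) * (0:ℝ) ^ 2) = 1 := by
    intro j _; ring
  rw [Finset.prod_congr rfl this]
  simp

lemma contAt_bigO_one {f : ℝ → ℝ} (hf : ContinuousAt f 0) :
    f =O[nhds 0] (fun _ : ℝ => (1:ℝ)) := Filter.Tendsto.isBigO_one ℝ hf

lemma pow_isBigO_pow {m n : ℕ} (h : n ≤ m) :
    (fun ε : ℝ => ε ^ m) =O[nhds 0] fun ε => ε ^ n := by
  rw [Asymptotics.isBigO_iff]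
  refine ⟨1, ?_⟩
  have h1 : ∀ᶠ ε : ℝ in nhds 0, |ε| ≤ 1 := by
    have : Set.Ioo (-1 : ℝ) 1 ∈ nhds (0:ℝ) := Ioo_mem_nhds (by norm_num) (by norm_num)
    filter_upwards [this] with ε hε
    rw [abs_le]; exact ⟨hε.1.le, hε.2.le⟩
  filter_upwards [h1] with ε hε
  rw [one_mul, Real.norm_eq_abs, Real.norm_eq_abs, abs_pow, abs_pow]
  exact pow_le_pow_of_le_one (abs_nonneg _) hε h

lemma diffAt_zero_bigO {f : ℝ → ℝ} (hf : DifferentiableAt ℝ f 0) (hf0 : f 0 = 0) :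
    f =O[nhds 0] fun ε : ℝ => ε := by
  have := hf.isBigO_sub
  simpa [hf0] using this

lemma pFun_contAt (k ℓ : ℕ) : ContinuousAt (pFun k ℓ) 0 := by
  have h : ContinuousAt (fun ε : ℝ => ε ^ (k - ℓ) * qFun k ℓ ε) 0 :=
    (continuousAt_pow _ _).mul (qFun_contAt k ℓ)
  exact h

lemma rFun_analyticAt (k ℓ : ℕ) : AnalyticAt ℝ (fun ε => rFun k ℓ ε) 0 := by
  unfold rFun
  exact (analyticAt_const.mul (analyticAt_const.sub
    (analyticAt_const.mul (analyticAt_id.pow 2)))).sub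
    (analyticAt_const.mul (analyticAt_id.pow 2))

lemma rFun_zero (k ℓ : ℕ) : rFun k ℓ 0 = (k : ℝ) - ℓ := by simp [rFun]

lemma pFun_zero_of_lt {k ℓ : ℕ} (h : ℓ < k) : pFun k ℓ 0 = 0 := by
  rw [pFun_eq, zero_pow (by omega), zero_mul]

lemma pFun_self_zero (k : ℕ) : pFun k k 0 = 1 := by
  rw [pFun_eq, Nat.sub_self, pow_zero, one_mul, qFun_zero, div_self, Real.sqrt_one]
  exact_mod_cast k.factorial_pos.ne'

open Asymptotics in
/-- for two real-analytic eigenvector branches `(η⁺, ξ⁺, λ⁺)` and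
`(η⁻, ξ⁻, λ⁻)` of the setup with `ξ⁺_0 ≡ 1` and `ξ⁻_0 ≡ −1`, one has
`λ⁺(ε)/η⁺(ε) − λ⁻(ε)/η⁻(ε) = 2√(k!)·ε^k + O(ε^{k+1})` as `ε → 0`. -/
theorem branch_phase_difference (k : ℕ) (hk : 1 ≤ k)
    (δ : ℝ) (hδ : 0 < δ)
    (ηp : ℝ → ℝ) (ξp : ℕ → ℝ → ℝ) (lamp : ℝ → ℝ)
    (ηm : ℝ → ℝ) (ξm : ℕ → ℝ → ℝ) (lamm : ℝ → ℝ)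
    (hηp : ∀ x ∈ Set.Ioo (-δ) δ, AnalyticAt ℝ ηp x)
    (hξp : ∀ ℓ ≤ k, ∀ x ∈ Set.Ioo (-δ) δ, AnalyticAt ℝ (ξp ℓ) x)
    (hlamp : ∀ x ∈ Set.Ioo (-δ) δ, AnalyticAt ℝ lamp x)
    (hηm : ∀ x ∈ Set.Ioo (-δ) δ, AnalyticAt ℝ ηm x)
    (hξm : ∀ ℓ ≤ k, ∀ x ∈ Set.Ioo (-δ) δ, AnalyticAt ℝ (ξm ℓ) x)
    (hlamm : ∀ x ∈ Set.Ioo (-δ) δ, AnalyticAt ℝ lamm x)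
    (hηp0 : ηp 0 = k) (hlamp0 : lamp 0 = k)
    (hηm0 : ηm 0 = k) (hlamm0 : lamm 0 = k)
    (hξp0 : ∀ ε ∈ Set.Ioo (-δ) δ, ξp 0 ε = 1)
    (hξm0 : ∀ ε ∈ Set.Ioo (-δ) δ, ξm 0 ε = -1)
    (hnormp : ∀ ε ∈ Set.Ioo (-δ) δ,
      (∑ ℓ ∈ Finset.range (k + 1), pFun k ℓ ε * ξp ℓ ε) = 1)
    (hnormm : ∀ ε ∈ Set.Ioo (-δ) δ,
      (∑ ℓ ∈ Finset.range (k + 1), pFun k ℓ ε * ξm ℓ ε) = 1)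
    (heigp : ∀ ε ∈ Set.Ioo (-δ) δ, ∀ ℓ ≤ k,
      lamp ε * ξp ℓ ε = rFun k ℓ ε * ξp ℓ ε + ηp ε * pFun k ℓ ε)
    (heigm : ∀ ε ∈ Set.Ioo (-δ) δ, ∀ ℓ ≤ k,
      lamm ε * ξm ℓ ε = rFun k ℓ ε * ξm ℓ ε + ηm ε * pFun k ℓ ε) :
    (fun ε : ℝ => lamp ε / ηp ε - lamm ε / ηm ε - 2 * Real.sqrt (k.factorial) * ε ^ k)
      =O[nhds 0] fun ε : ℝ => ε ^ (k + 1) := by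
  classical
  have h0I : (0:ℝ) ∈ Set.Ioo (-δ) δ := ⟨by linarith, hδ⟩
  have hI : Set.Ioo (-δ) δ ∈ nhds (0:ℝ) := Ioo_mem_nhds (by linarith) hδ
  have hE : ∀ᶠ ε in nhds (0:ℝ), ε ∈ Set.Ioo (-δ) δ := hI
  have hkR : (0:ℝ) < k := by exact_mod_cast Nat.pos_of_ne_zero (by omega)
  -- continuity of the data
  have hlampc : ContinuousAt lamp 0 := (hlamp 0 h0I).continuousAt
  have hlammc : ContinuousAt lamm 0 := (hlamm 0 h0I).continuousAt
  have hηpc : ContinuousAt ηp 0 := (hηp 0 h0I).continuousAt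
  have hηmc : ContinuousAt ηm 0 := (hηm 0 h0I).continuousAt
  have hrc : ∀ ℓ : ℕ, ContinuousAt (fun ε => rFun k ℓ ε) 0 :=
    fun ℓ => (rFun_analyticAt k ℓ).continuousAt
  have hDpc : ∀ ℓ : ℕ, ContinuousAt (fun ε => lamp ε - rFun k ℓ ε) 0 :=
    fun ℓ => hlampc.sub (hrc ℓ)
  have hDmc : ∀ ℓ : ℕ, ContinuousAt (fun ε => lamm ε - rFun k ℓ ε) 0 :=
    fun ℓ => hlammc.sub (hrc ℓ)
  have hDp0 : ∀ ℓ : ℕ, lamp 0 - rFun k ℓ 0 = (ℓ:ℝ) := by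
    intro ℓ; rw [hlamp0, rFun_zero]; ring
  have hDm0 : ∀ ℓ : ℕ, lamm 0 - rFun k ℓ 0 = (ℓ:ℝ) := by
    intro ℓ; rw [hlamm0, rFun_zero]; ring
  have hDp_ne : ∀ᶠ ε in nhds (0:ℝ), ∀ i ∈ Finset.range k, lamp ε - rFun k (i+1) ε ≠ 0 := by
    rw [Filter.eventually_all_finset]
    intro i _
    apply (hDpc (i+1)).eventually_ne
    rw [hDp0]
    exact_mod_cast (Nat.succ_ne_zero i)
  have hDm_ne : ∀ᶠ ε in nhds (0:ℝ), ∀ i ∈ Finset.range k, lamm ε - rFun k (i+1) ε ≠ 0 := by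
    rw [Filter.eventually_all_finset]
    intro i _
    apply (hDmc (i+1)).eventually_ne
    rw [hDm0]
    exact_mod_cast (Nat.succ_ne_zero i)
  have hηp_ne : ∀ᶠ ε in nhds (0:ℝ), ηp ε ≠ 0 :=
    hηpc.eventually_ne (by rw [hηp0]; exact ne_of_gt hkR)
  have hηm_ne : ∀ᶠ ε in nhds (0:ℝ), ηm ε ≠ 0 :=
    hηmc.eventually_ne (by rw [hηm0]; exact ne_of_gt hkR)
  -- the sums S⁺ and S⁻
  set Sp : ℝ → ℝ :=
    fun ε => ∑ i ∈ Finset.range k, (pFun k (i+1) ε)^2 / (lamp ε - rFun k (i+1) ε) with hSpdef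
  set Sm : ℝ → ℝ :=
    fun ε => ∑ i ∈ Finset.range k, (pFun k (i+1) ε)^2 / (lamm ε - rFun k (i+1) ε) with hSmdef
  have hSpc : ContinuousAt Sp 0 := by
    apply tendsto_finset_sum
    intro i _
    exact ((pFun_contAt k (i+1)).pow 2).div (hDpc (i+1))
      (by rw [hDp0]; exact_mod_cast (Nat.succ_ne_zero i))
  have hSmc : ContinuousAt Sm 0 := by
    apply tendsto_finset_sum
    intro i _
    exact ((pFun_contAt k (i+1)).pow 2).div (hDmc (i+1))
      (by rw [hDm0]; exact_mod_cast (Nat.succ_ne_zero i))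
  have hSval : ∀ g : ℝ → ℝ, g 0 - rFun k k 0 = (k:ℝ) →
      (∑ i ∈ Finset.range k, (pFun k (i+1) 0)^2 / (g 0 - rFun k (i+1) 0)) = 1/(k:ℝ) := by
    intro g hg
    rw [Finset.sum_eq_single_of_mem (k-1) (Finset.mem_range.mpr (by omega))]
    · have h1 : k - 1 + 1 = k := by omega
      rw [h1, pFun_self_zero, hg]
      norm_num
    · intro i hi hne
      have hlt : i + 1 < k := by
        have := Finset.mem_range.mp hi; omega
      rw [pFun_zero_of_lt hlt]
      norm_num
  have hSp0 : Sp 0 = 1/(k:ℝ) := by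
    rw [hSpdef]
    exact hSval lamp (by rw [hlamp0, rFun_zero]; ring)
  have hSm0 : Sm 0 = 1/(k:ℝ) := by
    rw [hSmdef]
    exact hSval lamm (by rw [hlamm0, rFun_zero]; ring)
  have hSp_ne : ∀ᶠ ε in nhds (0:ℝ), Sp ε ≠ 0 :=
    hSpc.eventually_ne (by rw [hSp0]; exact one_div_ne_zero (ne_of_gt hkR))
  have hSm_ne : ∀ᶠ ε in nhds (0:ℝ), Sm ε ≠ 0 :=
    hSmc.eventually_ne (by rw [hSm0]; exact one_div_ne_zero (ne_of_gt hkR))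
  -- the ℓ = 0 eigen-equations
  have keyl : ∀ᶠ ε in nhds (0:ℝ), lamp ε = rFun k 0 ε + ηp ε * pFun k 0 ε ∧
      lamm ε = rFun k 0 ε - ηm ε * pFun k 0 ε := by
    filter_upwards [hE] with ε hεI
    have h1 := heigp ε hεI 0 (by omega)
    have h2 := heigm ε hεI 0 (by omega)
    rw [hξp0 ε hεI, mul_one, mul_one] at h1
    rw [hξm0 ε hεI, mul_neg_one, mul_neg_one] at h2
    exact ⟨h1, by linarith⟩
  -- the normalization identities
  have keyp : ∀ᶠ ε in nhds (0:ℝ), ηp ε * Sp ε = 1 - pFun k 0 ε := by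
    filter_upwards [hE, hDp_ne] with ε hεI hD
    have hterm : ∀ i ∈ Finset.range k,
        ηp ε * ((pFun k (i+1) ε)^2 / (lamp ε - rFun k (i+1) ε)) =
          pFun k (i+1) ε * ξp (i+1) ε := by
      intro i hi
      have hD' := hD i hi
      have he := heigp ε hεI (i+1) (by have := Finset.mem_range.mp hi; omega)
      field_simp
      linear_combination (-(pFun k (i+1) ε)) * he
    have hn := hnormp ε hεI
    rw [Finset.sum_range_succ'] at hn
    rw [hξp0 ε hεI, mul_one] at hn
    calc ηp ε * Sp ε
        = ∑ i ∈ Finset.range k, ηp ε * ((pFun k (i+1) ε)^2 / (lamp ε - rFun k (i+1) ε)) := by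
          rw [hSpdef]; exact Finset.mul_sum _ _ _
      _ = ∑ i ∈ Finset.range k, pFun k (i+1) ε * ξp (i+1) ε := Finset.sum_congr rfl hterm
      _ = 1 - pFun k 0 ε := by linarith
  have keym : ∀ᶠ ε in nhds (0:ℝ), ηm ε * Sm ε = 1 + pFun k 0 ε := by
    filter_upwards [hE, hDm_ne] with ε hεI hD
    have hterm : ∀ i ∈ Finset.range k,
        ηm ε * ((pFun k (i+1) ε)^2 / (lamm ε - rFun k (i+1) ε)) =
          pFun k (i+1) ε * ξm (i+1) ε := by
      intro i hi
      have hD' := hD i hi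
      have he := heigm ε hεI (i+1) (by have := Finset.mem_range.mp hi; omega)
      field_simp
      linear_combination (-(pFun k (i+1) ε)) * he
    have hn := hnormm ε hεI
    rw [Finset.sum_range_succ'] at hn
    rw [hξm0 ε hεI, mul_neg_one] at hn
    calc ηm ε * Sm ε
        = ∑ i ∈ Finset.range k, ηm ε * ((pFun k (i+1) ε)^2 / (lamm ε - rFun k (i+1) ε)) := by
          rw [hSmdef]; exact Finset.mul_sum _ _ _
      _ = ∑ i ∈ Finset.range k, pFun k (i+1) ε * ξm (i+1) ε := Finset.sum_congr rfl hterm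
      _ = 1 + pFun k 0 ε := by linarith
  -- the key identity
  have star : ∀ᶠ ε in nhds (0:ℝ),
      (ηp ε - ηm ε) * (Sp ε * Sm ε) =
        pFun k 0 ε * ∑ i ∈ Finset.range k,
          (pFun k (i+1) ε)^2 *
            (ηp ε + ηm ε - (lamp ε - rFun k (i+1) ε) - (lamm ε - rFun k (i+1) ε)) /
            ((lamp ε - rFun k (i+1) ε) * (lamm ε - rFun k (i+1) ε)) := by
    filter_upwards [keyp, keym, keyl, hDp_ne, hDm_ne] with ε h1 h2 h3 hDp' hDm'
    have hld : lamp ε - lamm ε = (ηp ε + ηm ε) * pFun k 0 ε := by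
      rw [h3.1, h3.2]; ring
    have hterm : ∀ i ∈ Finset.range k,
        (1 - pFun k 0 ε) * ((pFun k (i+1) ε)^2 / (lamm ε - rFun k (i+1) ε))
          - (1 + pFun k 0 ε) * ((pFun k (i+1) ε)^2 / (lamp ε - rFun k (i+1) ε))
        = pFun k 0 ε * ((pFun k (i+1) ε)^2 *
            (ηp ε + ηm ε - (lamp ε - rFun k (i+1) ε) - (lamm ε - rFun k (i+1) ε)) /
            ((lamp ε - rFun k (i+1) ε) * (lamm ε - rFun k (i+1) ε))) := by
      intro i hi
      have hp' := hDp' i hi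
      have hm' := hDm' i hi
      have hL : lamp ε = lamm ε + (ηp ε + ηm ε) * pFun k 0 ε := by linarith
      field_simp
      linear_combination (pFun k (i+1) ε)^2 * hld
    calc (ηp ε - ηm ε) * (Sp ε * Sm ε)
        = (ηp ε * Sp ε) * Sm ε - (ηm ε * Sm ε) * Sp ε := by ring
      _ = (1 - pFun k 0 ε) * Sm ε - (1 + pFun k 0 ε) * Sp ε := by rw [h1, h2]
      _ = ∑ i ∈ Finset.range k,
            ((1 - pFun k 0 ε) * ((pFun k (i+1) ε)^2 / (lamm ε - rFun k (i+1) ε))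
              - (1 + pFun k 0 ε) * ((pFun k (i+1) ε)^2 / (lamp ε - rFun k (i+1) ε))) := by
          rw [hSpdef, hSmdef, Finset.mul_sum, Finset.mul_sum, ← Finset.sum_sub_distrib]
      _ = ∑ i ∈ Finset.range k, pFun k 0 ε * ((pFun k (i+1) ε)^2 *
            (ηp ε + ηm ε - (lamp ε - rFun k (i+1) ε) - (lamm ε - rFun k (i+1) ε)) /
            ((lamp ε - rFun k (i+1) ε) * (lamm ε - rFun k (i+1) ε))) :=
          Finset.sum_congr rfl hterm
      _ = _ := (Finset.mul_sum _ _ _).symm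
  -- the bracket sum is O(ε)
  have hBsum : (fun ε : ℝ => ∑ i ∈ Finset.range k,
      (pFun k (i+1) ε)^2 *
        (ηp ε + ηm ε - (lamp ε - rFun k (i+1) ε) - (lamm ε - rFun k (i+1) ε)) /
        ((lamp ε - rFun k (i+1) ε) * (lamm ε - rFun k (i+1) ε))) =O[nhds 0]
      (fun ε : ℝ => ε) := by
    apply Asymptotics.IsBigO.fun_sum
    intro i hi
    have hik : i + 1 ≤ k := by have := Finset.mem_range.mp hi; omega
    have hne : ((i:ℝ) + 1) ≠ 0 := by positivity
    have hDD : ContinuousAt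
        (fun ε => (lamp ε - rFun k (i+1) ε) * (lamm ε - rFun k (i+1) ε)) 0 :=
      (hDpc _).mul (hDmc _)
    have hDD0 : (lamp 0 - rFun k (i+1) 0) * (lamm 0 - rFun k (i+1) 0) ≠ 0 := by
      rw [hDp0, hDm0]; push_cast; positivity
    by_cases hcase : i + 1 = k
    · have hnum : (fun ε => ηp ε + ηm ε - (lamp ε - rFun k (i+1) ε)
          - (lamm ε - rFun k (i+1) ε)) =O[nhds 0] (fun ε : ℝ => ε) := by
        apply diffAt_zero_bigO
        · have h1 := (hηp 0 h0I).differentiableAt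
          have h2 := (hηm 0 h0I).differentiableAt
          have h3 := (hlamp 0 h0I).differentiableAt
          have h4 := (hlamm 0 h0I).differentiableAt
          have h5 := (rFun_analyticAt k (i+1)).differentiableAt
          fun_prop
        · rw [hcase, hηp0, hηm0, hlamp0, hlamm0, rFun_zero]; ring
      have hrest : ContinuousAt (fun ε => (pFun k (i+1) ε)^2 /
          ((lamp ε - rFun k (i+1) ε) * (lamm ε - rFun k (i+1) ε))) 0 :=
        ((pFun_contAt k (i+1)).pow 2).div hDD hDD0
      have hcomb := hnum.mul (contAt_bigO_one hrest)
      have heqf : (fun ε => (pFun k (i+1) ε)^2 *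
            (ηp ε + ηm ε - (lamp ε - rFun k (i+1) ε) - (lamm ε - rFun k (i+1) ε)) /
            ((lamp ε - rFun k (i+1) ε) * (lamm ε - rFun k (i+1) ε)))
          = fun ε => (ηp ε + ηm ε - (lamp ε - rFun k (i+1) ε) - (lamm ε - rFun k (i+1) ε)) *
              ((pFun k (i+1) ε)^2 /
                ((lamp ε - rFun k (i+1) ε) * (lamm ε - rFun k (i+1) ε))) := by
        funext ε; ring
      rw [heqf]
      simpa using hcomb
    · have hlt : 1 ≤ k - (i + 1) := by omega
      have hpO : (fun ε => pFun k (i+1) ε) =O[nhds 0] (fun ε : ℝ => ε) := by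
        have h1 : (fun ε : ℝ => ε^(k-(i+1))) =O[nhds 0] (fun ε : ℝ => ε^1) :=
          pow_isBigO_pow hlt
        have h2 := h1.mul (contAt_bigO_one (qFun_contAt k (i+1)))
        simp only [pow_one, mul_one] at h2
        have heqp : (fun ε : ℝ => ε ^ (k - (i+1)) * qFun k (i+1) ε)
            = fun ε => pFun k (i+1) ε := by
          funext ε; rw [pFun_eq]
        rwa [heqp] at h2
      have hrest : ContinuousAt (fun ε => pFun k (i+1) ε *
          (ηp ε + ηm ε - (lamp ε - rFun k (i+1) ε) - (lamm ε - rFun k (i+1) ε)) /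
          ((lamp ε - rFun k (i+1) ε) * (lamm ε - rFun k (i+1) ε))) 0 :=
        ((pFun_contAt k (i+1)).mul
          (((hηpc.add hηmc).sub (hDpc _)).sub (hDmc _))).div hDD hDD0
      have hcomb := hpO.mul (contAt_bigO_one hrest)
      have heqf : (fun ε => (pFun k (i+1) ε)^2 *
            (ηp ε + ηm ε - (lamp ε - rFun k (i+1) ε) - (lamm ε - rFun k (i+1) ε)) /
            ((lamp ε - rFun k (i+1) ε) * (lamm ε - rFun k (i+1) ε)))
          = fun ε => pFun k (i+1) ε * (pFun k (i+1) ε *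
            (ηp ε + ηm ε - (lamp ε - rFun k (i+1) ε) - (lamm ε - rFun k (i+1) ε)) /
            ((lamp ε - rFun k (i+1) ε) * (lamm ε - rFun k (i+1) ε))) := by
        funext ε; ring
      rw [heqf]
      simpa using hcomb
  -- p₀ = O(ε^k)
  have hp0O : (fun ε => pFun k 0 ε) =O[nhds 0] fun ε : ℝ => ε^k := by
    have h2 := (isBigO_refl (fun ε : ℝ => ε^k) (nhds 0)).mul
      (contAt_bigO_one (qFun_contAt k 0))
    simp only [mul_one] at h2
    have heqp : (fun ε : ℝ => ε ^ k * qFun k 0 ε) = fun ε => pFun k 0 ε := by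
      funext ε; rw [pFun_eq, Nat.sub_zero]
    rwa [heqp] at h2
  -- η⁺ - η⁻ = O(ε^(k+1))
  have hRHS : (fun ε => pFun k 0 ε * ∑ i ∈ Finset.range k,
      (pFun k (i+1) ε)^2 *
        (ηp ε + ηm ε - (lamp ε - rFun k (i+1) ε) - (lamm ε - rFun k (i+1) ε)) /
        ((lamp ε - rFun k (i+1) ε) * (lamm ε - rFun k (i+1) ε)))
      =O[nhds 0] fun ε : ℝ => ε^(k+1) := by
    have := hp0O.mul hBsum
    simpa [pow_succ] using this
  have hSinvc : ContinuousAt (fun ε => (Sp ε * Sm ε)⁻¹) 0 := by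
    apply (hSpc.mul hSmc).inv₀
    rw [Pi.mul_apply, hSp0, hSm0]
    positivity
  have hηdiff : (fun ε => ηp ε - ηm ε) =O[nhds 0] fun ε : ℝ => ε^(k+1) := by
    have hO := hRHS.mul (contAt_bigO_one hSinvc)
    simp only [mul_one] at hO
    apply hO.congr'
    · filter_upwards [star, hSp_ne, hSm_ne] with ε hstar hsp hsm
      rw [← hstar]
      field_simp
    · exact Filter.EventuallyEq.rfl
  -- the square-root part
  have hfact_pos : (0:ℝ) < (k.factorial : ℝ) := by exact_mod_cast k.factorial_pos
  set Num : ℝ → ℝ := fun ε => (k.factorial : ℝ) * (1 - (2 * ((0:ℕ) : ℝ) - 1) * ε ^ 2)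
    with hNumdef
  set Den : ℝ → ℝ := fun ε => (((0:ℕ).factorial : ℝ)) *
    ∏ j ∈ Finset.range (k - 0 + 1), (1 - ((((0:ℕ) : ℝ) - 1) + j) * ε ^ 2) with hDendef
  have hNumc : ContinuousAt Num 0 := by rw [hNumdef]; fun_prop
  have hDenc : ContinuousAt Den 0 := by rw [hDendef]; fun_prop
  have hDen0 : Den 0 = 1 := by
    rw [hDendef]
    have : ∀ j ∈ Finset.range (k - 0 + 1),
        (1 - ((((0:ℕ):ℝ) - 1) + j) * (0:ℝ)^2) = 1 := fun j _ => by ring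
    simp only []
    rw [Finset.prod_congr rfl this]
    simp
  have hNum0 : Num 0 = (k.factorial:ℝ) := by rw [hNumdef]; push_cast; ring
  have hDen_ne : ∀ᶠ ε in nhds (0:ℝ), Den ε ≠ 0 :=
    hDenc.eventually_ne (by rw [hDen0]; norm_num)
  have hA_pos : ∀ᶠ ε in nhds (0:ℝ), 0 < Num ε / Den ε := by
    have hc : ContinuousAt (fun ε => Num ε / Den ε) 0 :=
      hNumc.div hDenc (by rw [hDen0]; norm_num)
    have hv : (0:ℝ) < Num 0 / Den 0 := by rw [hNum0, hDen0]; simpa using hfact_pos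
    exact hc.eventually (eventually_gt_nhds hv)
  have hpoly : (fun ε => Num ε - (k.factorial:ℝ) * Den ε) =O[nhds 0] (fun ε : ℝ => ε) := by
    apply diffAt_zero_bigO
    · rw [hNumdef, hDendef]; fun_prop
    · rw [hNum0, hDen0]; ring
  have hq00 : qFun k 0 0 = Real.sqrt (k.factorial : ℝ) := by
    rw [qFun_zero]; norm_num
  have hsum_ne : qFun k 0 0 + Real.sqrt (k.factorial:ℝ) ≠ 0 := by
    rw [hq00]
    have := Real.sqrt_pos.mpr hfact_pos
    linarith
  have hrest2c : ContinuousAt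
      (fun ε => (Den ε)⁻¹ * (qFun k 0 ε + Real.sqrt (k.factorial:ℝ))⁻¹) 0 :=
    (hDenc.inv₀ (by rw [hDen0]; norm_num)).mul
      (((qFun_contAt k 0).add continuousAt_const).inv₀ hsum_ne)
  have hq0O : (fun ε => qFun k 0 ε - Real.sqrt (k.factorial:ℝ)) =O[nhds 0]
      (fun ε : ℝ => ε) := by
    have hcomb := hpoly.mul (contAt_bigO_one hrest2c)
    simp only [mul_one] at hcomb
    apply hcomb.congr' ?_ Filter.EventuallyEq.rfl
    filter_upwards [hA_pos, hDen_ne] with ε hpos hden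
    have hq2 : qFun k 0 ε * qFun k 0 ε = Num ε / Den ε := Real.mul_self_sqrt hpos.le
    have hs2 : Real.sqrt (k.factorial:ℝ) * Real.sqrt (k.factorial:ℝ) = (k.factorial:ℝ) :=
      Real.mul_self_sqrt hfact_pos.le
    have hqnn : 0 ≤ qFun k 0 ε := Real.sqrt_nonneg _
    have hsp : 0 < Real.sqrt (k.factorial:ℝ) := Real.sqrt_pos.mpr hfact_pos
    have hqs : qFun k 0 ε + Real.sqrt (k.factorial:ℝ) ≠ 0 := by linarith
    have e0 : (qFun k 0 ε - Real.sqrt (k.factorial:ℝ)) *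
        (qFun k 0 ε + Real.sqrt (k.factorial:ℝ)) = Num ε / Den ε - (k.factorial:ℝ) := by
      linear_combination hq2 - hs2
    have e1 : (qFun k 0 ε - Real.sqrt (k.factorial:ℝ)) *
        ((qFun k 0 ε + Real.sqrt (k.factorial:ℝ)) * Den ε)
        = Num ε - (k.factorial:ℝ) * Den ε := by
      calc (qFun k 0 ε - Real.sqrt (k.factorial:ℝ)) *
            ((qFun k 0 ε + Real.sqrt (k.factorial:ℝ)) * Den ε)
          = ((qFun k 0 ε - Real.sqrt (k.factorial:ℝ)) *
              (qFun k 0 ε + Real.sqrt (k.factorial:ℝ))) * Den ε := by ring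
        _ = (Num ε / Den ε - (k.factorial:ℝ)) * Den ε := by rw [e0]
        _ = Num ε - (k.factorial:ℝ) * Den ε := by field_simp
    rw [← e1]
    field_simp
  -- final assembly
  have htermA : (fun ε => rFun k 0 ε * ((ηm ε - ηp ε) / (ηp ε * ηm ε)))
      =O[nhds 0] fun ε : ℝ => ε^(k+1) := by
    have h1 : (fun ε => ηm ε - ηp ε) =O[nhds 0] fun ε : ℝ => ε^(k+1) := by
      have := hηdiff.neg_left
      simpa using this
    have hc : ContinuousAt (fun ε => rFun k 0 ε / (ηp ε * ηm ε)) 0 :=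
      (hrc 0).div (hηpc.mul hηmc) (by rw [hηp0, hηm0]; positivity)
    have hcomb := h1.mul (contAt_bigO_one hc)
    simp only [mul_one] at hcomb
    apply hcomb.congr' ?_ Filter.EventuallyEq.rfl
    apply Filter.EventuallyEq.of_eq; funext ε; ring
  have htermB : (fun ε => 2 * ε^k * (qFun k 0 ε - Real.sqrt (k.factorial:ℝ)))
      =O[nhds 0] fun ε : ℝ => ε^(k+1) := by
    have hcomb := ((isBigO_refl (fun ε:ℝ => ε^k) (nhds 0)).mul hq0O).const_mul_left 2
    have hpow : (fun ε : ℝ => ε^k * ε) = fun ε : ℝ => ε^(k+1) := by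
      funext ε; rw [pow_succ]
    rw [hpow] at hcomb
    apply hcomb.congr' ?_ Filter.EventuallyEq.rfl
    apply Filter.EventuallyEq.of_eq; funext ε; ring
  have hfinal_eq : (fun ε : ℝ => lamp ε / ηp ε - lamm ε / ηm ε
        - 2 * Real.sqrt (k.factorial) * ε ^ k)
      =ᶠ[nhds 0] fun ε => rFun k 0 ε * ((ηm ε - ηp ε) / (ηp ε * ηm ε))
        + 2 * ε^k * (qFun k 0 ε - Real.sqrt (k.factorial:ℝ)) := by
    filter_upwards [keyl, hηp_ne, hηm_ne] with ε h3 hp hm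
    have hP : pFun k 0 ε = ε^k * qFun k 0 ε := by rw [pFun_eq, Nat.sub_zero]
    rw [h3.1, h3.2, hP]
    field_simp
    ring
  exact (htermA.add htermB).congr' hfinal_eq.symm Filter.EventuallyEq.rfl
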